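/- Let $A = k[[X,Y,U,V]]/(XY, Y^3)$ with images $x,y,u,v$, let $\mathfrak{m} = (x,y,u,v)$ and $J = (x^n, u^n, v^n)$ for a fixed $n \geq 1$. Then $\mathfrak{m}^{2n} \cap (x^n, u^n, v^n) = \mathfrak{m}^n (x^n, u^n, v^n)$ for all $n \geq 1$. -/

import Mathlib

noncomputable section

/-- The variables of `k[[X,Y,U,V]]`. -/
def Xv (k : Type*) [Field k] (i : Fin 4) : MvPowerSeries (Fin 4) k :=
  MvPowerSeries.X i

/-- The relation ideal `(XY, Y³)` of `k[[X,Y,U,V]]`. -/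
def relIdeal (k : Type*) [Field k] : Ideal (MvPowerSeries (Fin 4) k) :=
  Ideal.span {Xv k 0 * Xv k 1, Xv k 1 ^ 3}

/-- `A = k[[X,Y,U,V]]/(XY, Y³)`. -/
abbrev Ak (k : Type*) [Field k] := MvPowerSeries (Fin 4) k ⧸ relIdeal k

namespace Stmt16Aux

open MvPowerSeries Finsupp

variable {k : Type*} [Field k]

abbrev E4 := Fin 4 →₀ ℕ
abbrev PS (k : Type*) [Field k] := MvPowerSeries (Fin 4) k

def deg (d : E4) : ℕ := d.sum fun _ m => m

lemma deg_add (a b : E4) : deg (a + b) = deg a + deg b :=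
  Finsupp.sum_add_index' (fun _ => rfl) (fun _ _ _ => rfl)

lemma deg_single (i : Fin 4) (m : ℕ) : deg (single i m) = m :=
  Finsupp.sum_single_index rfl

lemma deg_mono {a b : E4} (h : a ≤ b) : deg a ≤ deg b := by
  rw [← tsub_add_cancel_of_le h, deg_add]; exact Nat.le_add_left _ _

lemma exists_pos_coord {d : E4} (h : 1 ≤ deg d) : ∃ i, 1 ≤ d i := by
  by_contra hc
  push_neg at hc
  have : d = 0 := Finsupp.ext fun i => Nat.lt_one_iff.mp (hc i)
  simp [this, deg] at h

/-- support condition -/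
def OK (p : E4 → Prop) (f : PS k) : Prop := ∀ d, coeff d f ≠ 0 → p d

lemma OK.mono {p q : E4 → Prop} (h : ∀ d, p d → q d) {f : PS k} (hf : OK p f) : OK q f :=
  fun d hd => h d (hf d hd)

lemma OK.mul {p q r : E4 → Prop} (hpq : ∀ a b, p a → q b → r (a + b))
    {f g : PS k} (hf : OK p f) (hg : OK q g) : OK r (f * g) := by
  intro d hd
  rw [coeff_mul] at hd
  obtain ⟨⟨a, b⟩, hab, hne⟩ := Finset.exists_ne_zero_of_sum_ne_zero hd
  rw [Finset.HasAntidiagonal.mem_antidiagonal] at hab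
  subst hab
  exact hpq a b (hf a (left_ne_zero_of_mul hne)) (hg b (right_ne_zero_of_mul hne))

def uppIdeal (p : E4 → Prop) (hp : ∀ a b, p b → p (a + b)) : Ideal (PS k) where
  carrier := {f | OK p f}
  zero_mem' := fun d hd => absurd (map_zero (coeff d)) hd
  add_mem' := by
    intro a b ha hb d hd
    rw [map_add] at hd
    rcases (by by_contra hc; push_neg at hc; simp [hc.1, hc.2] at hd :
      coeff d a ≠ 0 ∨ coeff d b ≠ 0) with h | h
    exacts [ha d h, hb d h]
  smul_mem' := by
    intro c f hf
    simp only [smul_eq_mul, Set.mem_setOf_eq]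
    exact OK.mul (p := fun _ => True) (fun a b _ hb => hp a b hb) (fun _ _ => trivial) hf

lemma mem_uppIdeal {p hp} {f : PS k} : f ∈ (uppIdeal p hp : Ideal (PS k)) ↔ OK p f := Iff.rfl

/-- shift by exponent e -/
def shift (e : E4) (f : PS k) : PS k := fun d => coeff (d + e) f

lemma coeff_shift (e d : E4) (f : PS k) : coeff d (shift e f) = coeff (d + e) f := rfl

lemma eq_monomial_mul_shift {e : E4} {f : PS k} (h : ∀ d, coeff d f ≠ 0 → e ≤ d) :
    f = monomial e 1 * shift e f := by
  ext d
  rw [coeff_monomial_mul]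
  split
  · rw [one_mul, coeff_shift, tsub_add_cancel_of_le (by assumption)]
  · by_contra hc
    exact ‹¬ e ≤ d› (h d hc)

lemma mem_span_monomial {e : E4} {f : PS k} (h : ∀ d, coeff d f ≠ 0 → e ≤ d) :
    f ∈ Ideal.span {(monomial e 1 : PS k)} :=
  Ideal.mem_span_singleton'.mpr ⟨shift e f, by rw [mul_comm]; exact (eq_monomial_mul_shift h).symm⟩

open Classical in
/-- filter the coefficients of f by a predicate on exponents -/
def filt (p : E4 → Prop) (f : PS k) : PS k := fun d => if p d then coeff d f else 0

open Classical in
lemma coeff_filt (p : E4 → Prop) (f : PS k) (d : E4) :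
    coeff d (filt p f) = if p d then coeff d f else 0 := rfl

lemma filt_add_filt_not (p : E4 → Prop) (f : PS k) :
    filt p f + filt (fun d => ¬ p d) f = f := by
  classical
  ext d
  rw [map_add, coeff_filt, coeff_filt]
  by_cases h : p d <;> simp [h]

lemma coeff_filt_ne {p : E4 → Prop} {f : PS k} {d : E4} (h : coeff d (filt p f) ≠ 0) :
    p d ∧ coeff d f ≠ 0 := by
  classical
  rw [coeff_filt] at h
  by_cases hp : p d
  · exact ⟨hp, by simpa [hp] using h⟩
  · simp [hp] at h

/-- the maximal ideal (X 0, X 1, X 2, X 3) -/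
def Mdl (k : Type*) [Field k] : Ideal (PS k) :=
  Ideal.span {X 0, X 1, X 2, X 3}

lemma X_mem_Mdl (i : Fin 4) : (X i : PS k) ∈ Mdl k := by
  apply Ideal.subset_span
  fin_cases i <;> simp

lemma coeff_X_ne {d : E4} {i : Fin 4} (h : coeff d (X i : PS k) ≠ 0) : d = single i 1 := by
  rw [coeff_X] at h
  by_cases hd : d = single i 1
  · exact hd
  · simp [hd] at h

lemma OK_of_mem_Mdl {f : PS k} (hf : f ∈ Mdl k) : OK (fun d => 1 ≤ deg d) f := by
  have : Mdl k ≤ uppIdeal (fun d => 1 ≤ deg d)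
      (fun a b hb => le_trans hb (deg_mono le_add_self)) := by
    rw [Mdl, Ideal.span_le]
    intro g hg
    simp only [Set.mem_insert_iff, Set.mem_singleton_iff] at hg
    rcases hg with h | h | h | h <;>
      · subst h
        intro d hd
        rw [coeff_X_ne hd, deg_single]
  exact this hf

lemma OK_deg_of_mem_pow {m : ℕ} {f : PS k} (hf : f ∈ Mdl k ^ m) :
    OK (fun d => m ≤ deg d) f := by
  induction m generalizing f with
  | zero => exact fun d _ => Nat.zero_le _
  | succ m ih =>
    have : Mdl k ^ (m + 1) ≤ uppIdeal (fun d => m + 1 ≤ deg d)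
        (fun a b hb => le_trans hb (deg_mono le_add_self)) := by
      rw [pow_succ, Ideal.mul_le]
      intro a ha b hb
      exact OK.mul (r := fun d => m + 1 ≤ deg d)
        (fun d₁ d₂ h1 h2 => by show m + 1 ≤ deg (d₁ + d₂); rw [deg_add]; omega) (ih ha) (OK_of_mem_Mdl hb)
    exact this hf

/-- existence of a unique "leading variable" index -/
lemma exists_unique_lead {d : E4} (h : ∃ i, 1 ≤ d i) :
    ∃! i : Fin 4, 1 ≤ d i ∧ ∀ j, j < i → d j = 0 := by
  classical
  obtain ⟨i₀, hi₀, hmin⟩ := Finset.exists_min_image (Finset.univ.filter fun i => 1 ≤ d i)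
    id (by obtain ⟨i, hi⟩ := h; exact ⟨i, by simp [hi]⟩)
  simp only [Finset.mem_filter, Finset.mem_univ, true_and] at hi₀
  refine ⟨i₀, ⟨hi₀, fun j hj => ?_⟩, ?_⟩
  · by_contra hc
    have : 1 ≤ d j := Nat.one_le_iff_ne_zero.mpr hc
    have := hmin j (by simp [this])
    simp only [id] at this
    omega
  · rintro i ⟨hi1, hi2⟩
    rcases lt_trichotomy i i₀ with hlt | he | hgt
    · have := hmin i (by simp [hi1])
      simp only [id] at this
      exact absurd hlt (not_lt.mpr this)
    · exact he
    · exact absurd (hi2 i₀ hgt) (by omega)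

lemma mem_pow_of_OK_deg {m : ℕ} {f : PS k} (hf : OK (fun d => m ≤ deg d) f) :
    f ∈ Mdl k ^ m := by
  classical
  induction m generalizing f with
  | zero => simp
  | succ m ih =>
    -- split f into 4 pieces according to the leading variable
    set q : Fin 4 → E4 → Prop := fun i d => 1 ≤ d i ∧ ∀ j, j < i → d j = 0 with hq
    have hsplit : f = ∑ i : Fin 4, filt (q i) f := by
      ext d
      rw [map_sum]
      by_cases hd : coeff d f = 0
      · simp [coeff_filt, hd]
      · have hdeg : 1 ≤ deg d := le_trans (by omega) (hf d hd)
        obtain ⟨i₀, hi₀, huniq⟩ := exists_unique_lead (exists_pos_coord hdeg)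
        rw [Finset.sum_eq_single i₀]
        · rw [coeff_filt, if_pos hi₀]
        · intro j _ hj
          rw [coeff_filt, if_neg (fun hqj => hj (huniq j hqj))]
        · simp
    rw [hsplit]
    apply Ideal.sum_mem
    intro i _
    have hsupp : ∀ d, coeff d (filt (q i) f) ≠ 0 → single i 1 ≤ d := by
      intro d hd
      exact single_le_iff.mpr (coeff_filt_ne hd).1.1
    rw [eq_monomial_mul_shift hsupp]
    have hg : shift (single i 1) (filt (q i) f) ∈ Mdl k ^ m := by
      apply ih
      intro d hd
      rw [coeff_shift] at hd
      have h2 := hf _ (coeff_filt_ne hd).2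
      simp only [deg_add, deg_single] at h2
      omega
    have : monomial (single i 1) 1 * shift (single i 1) (filt (q i) f)
        = shift (single i 1) (filt (q i) f) * X i := by
      rw [X_def, mul_comm]
    rw [this, pow_succ]
    exact Ideal.mul_mem_mul hg (X_mem_Mdl i)

def exy : E4 := single 0 1 + single 1 1
def ey3 : E4 := single 1 3

def QI (k : Type*) [Field k] (n : ℕ) : Ideal (PS k) :=
  Ideal.span {monomial (single 0 n) 1, monomial (single 2 n) 1, monomial (single 3 n) 1}

lemma OK_monomial {e : E4} {p : E4 → Prop} (hpe : p e) : OK p (monomial e 1 : PS k) := by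
  classical
  intro d hd
  rw [coeff_monomial] at hd
  by_cases h : d = e
  · rw [h]; exact hpe
  · simp [h] at hd

lemma QI_le_pow (n : ℕ) : QI k n ≤ Mdl k ^ n := by
  rw [QI, Ideal.span_le]
  intro g hg
  simp only [Set.mem_insert_iff, Set.mem_singleton_iff] at hg
  rcases hg with h | h | h <;>
    · subst h
      rw [← X_pow_eq]
      exact Ideal.pow_mem_pow (X_mem_Mdl _) n

lemma piece_mem {n : ℕ} (i : Fin 4) (hmem : (monomial (single i n) 1 : PS k) ∈ QI k n)
    {g : PS k} (hg : ∀ d, coeff d g ≠ 0 → single i n ≤ d ∧ 2 * n ≤ deg d) :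
    g ∈ Mdl k ^ n * QI k n := by
  rw [eq_monomial_mul_shift (fun d hd => (hg d hd).1)]
  have hsh : shift (single i n) g ∈ Mdl k ^ n := by
    apply mem_pow_of_OK_deg
    intro d hd
    rw [coeff_shift] at hd
    have h2 := (hg _ hd).2
    simp only [deg_add, deg_single] at h2
    omega
  rw [mul_comm ((monomial (single i n)) 1)]
  exact Ideal.mul_mem_mul hsh hmem

lemma relIdeal_eq : relIdeal k = Ideal.span {(monomial exy 1 : PS k), monomial ey3 1} := by
  have h1 : Xv k 0 * Xv k 1 = monomial exy 1 := by
    rw [Xv, Xv, X_def, X_def, monomial_mul_monomial, one_mul, exy]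
  have h2 : Xv k 1 ^ 3 = monomial ey3 1 := by
    rw [Xv, X_pow_eq, ey3]
  rw [relIdeal, h1, h2]

lemma le_upp_P1 (n : ℕ) :
    Mdl k ^ (2 * n) ⊔ relIdeal k ≤ uppIdeal (fun d => 2 * n ≤ deg d ∨ exy ≤ d ∨ ey3 ≤ d)
      (fun a b hb => by
        rcases hb with h | h | h
        · exact Or.inl (le_trans h (deg_mono le_add_self))
        · exact Or.inr (Or.inl (le_trans h le_add_self))
        · exact Or.inr (Or.inr (le_trans h le_add_self))) := by
  apply sup_le
  · intro f hf
    exact (OK_deg_of_mem_pow hf).mono (fun d hd => Or.inl hd)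
  · rw [relIdeal_eq, Ideal.span_le]
    rintro g hg
    simp only [Set.mem_insert_iff, Set.mem_singleton_iff] at hg
    rcases hg with h | h <;> subst h
    · exact OK_monomial (Or.inr (Or.inl le_rfl))
    · exact OK_monomial (Or.inr (Or.inr le_rfl))

lemma le_upp_P2 (n : ℕ) :
    QI k n ⊔ relIdeal k ≤ uppIdeal
      (fun d => single 0 n ≤ d ∨ single 2 n ≤ d ∨ single 3 n ≤ d ∨ exy ≤ d ∨ ey3 ≤ d)
      (fun a b hb => by
        rcases hb with h | h | h | h | h
        · exact Or.inl (le_trans h le_add_self)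
        · exact Or.inr (Or.inl (le_trans h le_add_self))
        · exact Or.inr (Or.inr (Or.inl (le_trans h le_add_self)))
        · exact Or.inr (Or.inr (Or.inr (Or.inl (le_trans h le_add_self))))
        · exact Or.inr (Or.inr (Or.inr (Or.inr (le_trans h le_add_self))))) := by
  apply sup_le
  · rw [QI, Ideal.span_le]
    rintro g hg
    simp only [Set.mem_insert_iff, Set.mem_singleton_iff] at hg
    rcases hg with h | h | h <;> subst h
    · exact OK_monomial (Or.inl le_rfl)
    · exact OK_monomial (Or.inr (Or.inl le_rfl))
    · exact OK_monomial (Or.inr (Or.inr (Or.inl le_rfl)))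
  · rw [relIdeal_eq, Ideal.span_le]
    rintro g hg
    simp only [Set.mem_insert_iff, Set.mem_singleton_iff] at hg
    rcases hg with h | h <;> subst h
    · exact OK_monomial (Or.inr (Or.inr (Or.inr (Or.inl le_rfl))))
    · exact OK_monomial (Or.inr (Or.inr (Or.inr (Or.inr le_rfl))))

lemma mem_rel_of_supp {e : E4} (he : e = exy ∨ e = ey3) {g : PS k}
    (h : ∀ d, coeff d g ≠ 0 → e ≤ d) : g ∈ relIdeal k := by
  rw [relIdeal_eq]
  refine Ideal.span_mono ?_ (mem_span_monomial h)
  rcases he with h' | h' <;> subst h' <;> simp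

set_option maxHeartbeats 1000000 in
lemma central (n : ℕ) (hn : 1 ≤ n) :
    (Mdl k ^ (2 * n) ⊔ relIdeal k) ⊓ (QI k n ⊔ relIdeal k) =
      Mdl k ^ n * QI k n ⊔ relIdeal k := by
  classical
  apply le_antisymm
  · intro f hf
    rw [Ideal.mem_inf] at hf
    have hub1 := le_upp_P1 (k := k) n hf.1
    have hub2 := le_upp_P2 (k := k) n hf.2
    rw [mem_uppIdeal] at hub1 hub2
    set p1 : E4 → Prop := fun d => single 0 n ≤ d ∧ 2 * n ≤ deg d with hp1
    set p2 : E4 → Prop := fun d => single 2 n ≤ d ∧ 2 * n ≤ deg d with hp2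
    set p3 : E4 → Prop := fun d => single 3 n ≤ d ∧ 2 * n ≤ deg d with hp3
    set p4 : E4 → Prop := fun d => exy ≤ d with hp4
    set p5 : E4 → Prop := fun d => ey3 ≤ d with hp5
    have hcover : ∀ d, coeff d f ≠ 0 → p1 d ∨ p2 d ∨ p3 d ∨ p4 d ∨ p5 d := by
      intro d hd
      have h1 := hub1 d hd
      have h2 := hub2 d hd
      simp only [hp1, hp2, hp3, hp4, hp5]
      tauto
    set f1 := filt p1 f with hf1
    set r1 := filt (fun d => ¬ p1 d) f with hr1
    set f2 := filt p2 r1 with hf2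
    set r2 := filt (fun d => ¬ p2 d) r1 with hr2
    set f3 := filt p3 r2 with hf3
    set r3 := filt (fun d => ¬ p3 d) r2 with hr3
    set f4 := filt p4 r3 with hf4
    set r4 := filt (fun d => ¬ p4 d) r3 with hr4
    set f5 := filt p5 r4 with hf5
    set r5 := filt (fun d => ¬ p5 d) r4 with hr5
    have hr5z : r5 = 0 := by
      ext d
      rw [map_zero]
      by_contra hd
      have c5 := coeff_filt_ne hd
      have c4 := coeff_filt_ne c5.2
      have c3 := coeff_filt_ne c4.2
      have c2 := coeff_filt_ne c3.2
      have c1 := coeff_filt_ne c2.2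
      rcases hcover d c1.2 with h | h | h | h | h
      · exact c1.1 h
      · exact c2.1 h
      · exact c3.1 h
      · exact c4.1 h
      · exact c5.1 h
    have hsum : f = f1 + (f2 + (f3 + (f4 + f5))) := by
      have e5 : f5 + r5 = r4 := filt_add_filt_not _ _
      have e4 : f4 + r4 = r3 := filt_add_filt_not _ _
      have e3 : f3 + r3 = r2 := filt_add_filt_not _ _
      have e2 : f2 + r2 = r1 := filt_add_filt_not _ _
      have e1 : f1 + r1 = f := filt_add_filt_not _ _
      rw [hr5z, add_zero] at e5
      rw [← e1, ← e2, ← e3, ← e4, ← e5]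
    have mon0 : (monomial (single (0 : Fin 4) n) 1 : PS k) ∈ QI k n :=
      Ideal.subset_span (by simp)
    have mon2 : (monomial (single (2 : Fin 4) n) 1 : PS k) ∈ QI k n :=
      Ideal.subset_span (by simp)
    have mon3 : (monomial (single (3 : Fin 4) n) 1 : PS k) ∈ QI k n :=
      Ideal.subset_span (by simp)
    have m1 : f1 ∈ Mdl k ^ n * QI k n :=
      piece_mem 0 mon0 (fun d hd => (coeff_filt_ne hd).1)
    have m2 : f2 ∈ Mdl k ^ n * QI k n :=
      piece_mem 2 mon2 (fun d hd => (coeff_filt_ne hd).1)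
    have m3 : f3 ∈ Mdl k ^ n * QI k n :=
      piece_mem 3 mon3 (fun d hd => (coeff_filt_ne hd).1)
    have m4 : f4 ∈ relIdeal k :=
      mem_rel_of_supp (Or.inl rfl) (fun d hd => (coeff_filt_ne hd).1)
    have m5 : f5 ∈ relIdeal k :=
      mem_rel_of_supp (Or.inr rfl) (fun d hd => (coeff_filt_ne hd).1)
    rw [hsum]
    exact add_mem (Ideal.mem_sup_left m1) (add_mem (Ideal.mem_sup_left m2)
      (add_mem (Ideal.mem_sup_left m3) (add_mem (Ideal.mem_sup_right m4)
        (Ideal.mem_sup_right m5))))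
  · apply sup_le
    · apply le_inf
      · calc Mdl k ^ n * QI k n ≤ Mdl k ^ n * Mdl k ^ n :=
              Ideal.mul_mono_right (QI_le_pow n)
          _ = Mdl k ^ (2 * n) := by rw [← pow_add, two_mul]
          _ ≤ Mdl k ^ (2 * n) ⊔ relIdeal k := le_sup_left
      · calc Mdl k ^ n * QI k n ≤ QI k n := Ideal.mul_le_right
          _ ≤ QI k n ⊔ relIdeal k := le_sup_left
    · exact le_inf le_sup_right le_sup_right

set_option synthInstance.maxHeartbeats 1000000 in
set_option maxHeartbeats 1000000 in
lemma map_Mdl (n : ℕ) :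
    Ideal.span {Ideal.Quotient.mk (relIdeal k) (Xv k 0), Ideal.Quotient.mk (relIdeal k) (Xv k 1),
      Ideal.Quotient.mk (relIdeal k) (Xv k 2), Ideal.Quotient.mk (relIdeal k) (Xv k 3)} =
    Ideal.map (Ideal.Quotient.mk (relIdeal k)) (Mdl k) := by
  rw [Mdl, Ideal.map_span]
  congr 1
  simp only [Set.image_insert_eq, Set.image_singleton, Xv]

set_option synthInstance.maxHeartbeats 1000000 in
set_option maxHeartbeats 1000000 in
lemma map_QI (n : ℕ) :
    Ideal.span {Ideal.Quotient.mk (relIdeal k) (Xv k 0) ^ n,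
      Ideal.Quotient.mk (relIdeal k) (Xv k 2) ^ n,
      Ideal.Quotient.mk (relIdeal k) (Xv k 3) ^ n} =
    Ideal.map (Ideal.Quotient.mk (relIdeal k)) (QI k n) := by
  have hXp : ∀ i : Fin 4, Ideal.Quotient.mk (relIdeal k) ((monomial (single i n)) 1)
      = Ideal.Quotient.mk (relIdeal k) (Xv k i) ^ n := by
    intro i
    rw [← X_pow_eq, Xv, map_pow]
  rw [QI, Ideal.map_span]
  congr 1
  rw [Set.image_insert_eq, Set.image_insert_eq, Set.image_singleton, hXp, hXp, hXp]

set_option synthInstance.maxHeartbeats 1000000 in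
set_option maxHeartbeats 2000000 in
lemma main (n : ℕ) (hn : 1 ≤ n) :
    (Ideal.map (Ideal.Quotient.mk (relIdeal k)) (Mdl k)) ^ (2 * n) ⊓
      Ideal.map (Ideal.Quotient.mk (relIdeal k)) (QI k n) =
    (Ideal.map (Ideal.Quotient.mk (relIdeal k)) (Mdl k)) ^ n *
      Ideal.map (Ideal.Quotient.mk (relIdeal k)) (QI k n) := by
  set π := Ideal.Quotient.mk (relIdeal k) with hπ
  have hs : Function.Surjective π := Ideal.Quotient.mk_surjective
  have hcm : ∀ K : Ideal (PS k), Ideal.comap π (Ideal.map π K) = K ⊔ relIdeal k := by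
    intro K
    rw [Ideal.comap_map_of_surjective π hs, ← RingHom.ker_eq_comap_bot, Ideal.mk_ker]
  rw [← Ideal.map_pow, ← Ideal.map_pow, ← Ideal.map_mul]
  calc Ideal.map π (Mdl k ^ (2 * n)) ⊓ Ideal.map π (QI k n)
      = Ideal.map π (Ideal.comap π (Ideal.map π (Mdl k ^ (2 * n)) ⊓ Ideal.map π (QI k n))) :=
        (Ideal.map_comap_of_surjective π hs _).symm
    _ = Ideal.map π ((Mdl k ^ (2 * n) ⊔ relIdeal k) ⊓ (QI k n ⊔ relIdeal k)) := by
        rw [Ideal.comap_inf, hcm, hcm]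
    _ = Ideal.map π (Mdl k ^ n * QI k n ⊔ relIdeal k) := by rw [central n hn]
    _ = Ideal.map π (Mdl k ^ n * QI k n) := by
        rw [Ideal.map_sup, Ideal.map_quotient_self, sup_bot_eq]

end Stmt16Aux

set_option synthInstance.maxHeartbeats 1000000 in
set_option maxHeartbeats 2000000 in
theorem stmt16 (k : Type*) [Field k] :
    ∀ n : ℕ, 1 ≤ n →
    (letI π := Ideal.Quotient.mk (relIdeal k)
     letI x := π (Xv k 0)
     letI y := π (Xv k 1)
     letI u := π (Xv k 2)
     letI v := π (Xv k 3)
     letI m : Ideal (Ak k) := Ideal.span {x, y, u, v}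
     m ^ (2 * n) ⊓ Ideal.span {x ^ n, u ^ n, v ^ n} =
       m ^ n * Ideal.span {x ^ n, u ^ n, v ^ n}) := by
  intro n hn
  show (Ideal.span {Ideal.Quotient.mk (relIdeal k) (Xv k 0),
      Ideal.Quotient.mk (relIdeal k) (Xv k 1), Ideal.Quotient.mk (relIdeal k) (Xv k 2),
      Ideal.Quotient.mk (relIdeal k) (Xv k 3)}) ^ (2 * n) ⊓
      Ideal.span {Ideal.Quotient.mk (relIdeal k) (Xv k 0) ^ n,
        Ideal.Quotient.mk (relIdeal k) (Xv k 2) ^ n,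
        Ideal.Quotient.mk (relIdeal k) (Xv k 3) ^ n} =
    (Ideal.span {Ideal.Quotient.mk (relIdeal k) (Xv k 0),
      Ideal.Quotient.mk (relIdeal k) (Xv k 1), Ideal.Quotient.mk (relIdeal k) (Xv k 2),
      Ideal.Quotient.mk (relIdeal k) (Xv k 3)}) ^ n *
      Ideal.span {Ideal.Quotient.mk (relIdeal k) (Xv k 0) ^ n,
        Ideal.Quotient.mk (relIdeal k) (Xv k 2) ^ n,
        Ideal.Quotient.mk (relIdeal k) (Xv k 3) ^ n}
  rw [Stmt16Aux.map_Mdl n, Stmt16Aux.map_QI n]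
  exact Stmt16Aux.main n hn

end
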